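/- Let p_J, p_n ∈ ℝ with 0 < p_J < 1 and 0 < p_n ≤ 1, and D_J, D_n ≥ 0. Define p_{J'} = 1 - (1-p_J)(1-p_n) and D_{J'} = (p_J D_J + (1-p_J) p_n D_n)/p_{J'}. If 1/p_{J'} + D_{J'} ≤ 1/p_J + D_J (i.e., including n does not increase the cost), then 1/p_{J'} + D_{J'} ≥ D_n. -/

import Mathlib

theorem anypath_optimal_set_distance_ge_farthest (pJ pn DJ Dn : ℝ)
    (hpJ0 : 0 < pJ) (hpJ1 : pJ < 1) (hpn0 : 0 < pn) (hpn1 : pn ≤ 1)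
    (hDJ : 0 ≤ DJ) (hDn : 0 ≤ Dn)
    (h : 1 / (1 - (1 - pJ) * (1 - pn)) +
          (pJ * DJ + (1 - pJ) * pn * Dn) / (1 - (1 - pJ) * (1 - pn))
        ≤ 1 / pJ + DJ) :
    Dn ≤ 1 / (1 - (1 - pJ) * (1 - pn)) +
          (pJ * DJ + (1 - pJ) * pn * Dn) / (1 - (1 - pJ) * (1 - pn)) := by
  have hP : 0 < 1 - (1 - pJ) * (1 - pn) := by nlinarith
  rw [← add_div, le_div_iff₀ hP]
  rw [← add_div, div_le_iff₀ hP] at h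
  -- from h derive Dn ≤ 1/pJ + DJ
  have h2 : (1 + (pJ * DJ + (1 - pJ) * pn * Dn)) * pJ ≤ (1 / pJ + DJ) * (1 - (1 - pJ) * (1 - pn)) * pJ :=
    mul_le_mul_of_nonneg_right h hpJ0.le
  rw [one_div, mul_comm] at h2
  have key : Dn * pJ ≤ 1 + pJ * DJ := by
    have hq : 0 < (1 - pJ) * pn := mul_pos (sub_pos.mpr hpJ1) hpn0
    nlinarith [mul_inv_cancel₀ (ne_of_gt hpJ0)]
  nlinarith [mul_pos (sub_pos.mpr hpJ1) hpn0]
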